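/- Consider a market with finite player set N and item set M, where each valuation v_i : 2^M → ℝ≥0 is monotone, α-submodular (α ≥ 1), and ε-close to a linear valuation ℓ_i. Let p : M → ℝ≥0 and let (S_i)_{i∈N} be a full allocation of M such that for each player i there is B_i ⊆ S_i with: (i) α·(v_i(B'') − v_i(∅)) ≥ p(B'') for every B'' ⊆ B_i; and (ii) v_i(S_i) − p(S_i) ≥ v_i(B_i ∪ X) − p(B_i ∪ X) for every X ⊆ M. Then Σ_i v_i(S_i) ≥ OPT / ((1+ε)·(α + 2ε)), where OPT is the maximum of Σ_i v_i(T_i) over all allocations (T_i). -/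

import Mathlib

lemma kc_aux_ineq (α ε c lA lD lW vS vD v0 vX : ℝ)
    (hα : 1 ≤ α) (hε : 0 ≤ ε) (hc : 0 ≤ c) (hlA : 0 ≤ lA) (hlD : 0 ≤ lD) (hlW : 0 ≤ lW)
    (hvX : c + lA + lD ≤ vX)
    (hvD1 : vD ≤ (1 + ε) * (c + lD))
    (hvD2 : vD ≤ vS)
    (hv0 : c ≤ v0)
    (hvS1 : c + lA + lD + lW ≤ vS)
    (hvS2 : vS ≤ (1 + ε) * (c + lA + lD + lW)) :
    c + lA + (vS - (c + lA + lD + lW)) + α * (vD - v0) + (vS - vX)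
      ≤ (α + 2 * ε) * vS := by
  rcases le_or_gt (α + 2 * ε) 2 with h2 | h2
  · nlinarith [mul_nonneg (by linarith : (0:ℝ) ≤ α) (by linarith : (0:ℝ) ≤ (1+ε)*(c+lD) - vD + (v0 - c)),
      mul_nonneg (by linarith : (0:ℝ) ≤ 2 - α - 2*ε) (by linarith : (0:ℝ) ≤ (1+ε)*(c+lA+lD+lW) - vS),
      mul_nonneg (mul_nonneg hε hε) hc, mul_nonneg (mul_nonneg hε hε) hlA,
      mul_nonneg (mul_nonneg hε hε) hlD, mul_nonneg (mul_nonneg hε hε) hlW,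
      mul_nonneg (by linarith : (0:ℝ) ≤ α - 1) hc,
      mul_nonneg (by linarith : (0:ℝ) ≤ α - 1) hlA,
      mul_nonneg (by linarith : (0:ℝ) ≤ α - 1) hlW,
      mul_nonneg hε hc, mul_nonneg hε hlA, mul_nonneg hε hlD, mul_nonneg hε hlW]
  · rcases le_or_gt ε 1 with hε1 | hε1
    · nlinarith [mul_nonneg (by linarith : (0:ℝ) ≤ α + 2*ε - 2) (by linarith : (0:ℝ) ≤ (vS - vD) + (v0 - c)),
        mul_nonneg (by linarith : (0:ℝ) ≤ 2 - 2*ε) (by linarith : (0:ℝ) ≤ (1+ε)*(c+lD) - vD + (v0 - c)),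
        mul_nonneg (mul_nonneg hε hε) hc, mul_nonneg (mul_nonneg hε hε) hlD,
        mul_nonneg (by linarith : (0:ℝ) ≤ α - 1) hc,
        mul_nonneg hε hc, mul_nonneg hε hlA, mul_nonneg hε hlD, mul_nonneg hε hlW,
        mul_nonneg (by linarith : (0:ℝ) ≤ α - 1) hlA,
        mul_nonneg (by linarith : (0:ℝ) ≤ α - 1) hlW]
    · nlinarith [mul_nonneg (by linarith : (0:ℝ) ≤ α) (by linarith : (0:ℝ) ≤ (vS - vD) + (v0 - c)),
        mul_nonneg (by linarith : (0:ℝ) ≤ ε - 1) (by linarith : (0:ℝ) ≤ vS - (c+lA+lD+lW)),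
        mul_nonneg (by linarith : (0:ℝ) ≤ 2*ε - 1) hlA,
        mul_nonneg (by linarith : (0:ℝ) ≤ 2*ε - 1) hlW,
        mul_nonneg (by linarith : (0:ℝ) ≤ α - 1) hc,
        mul_nonneg hε hc, mul_nonneg hε hlD, mul_nonneg hε hlA, mul_nonneg hε hlW]

theorem kelso_crawford_close_to_linear_welfare
    {N M : Type*} [Fintype N] [Fintype M] [DecidableEq M]
    (α ε : ℝ) (hα : 1 ≤ α) (hε : 0 ≤ ε)
    (v : N → Finset M → ℝ)
    (hv : ∀ (i : N) (S : Finset M), 0 ≤ v i S)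
    (hmono : ∀ (i : N) (S T : Finset M), S ⊆ T → v i S ≤ v i T)
    (hsub : ∀ (i : N) (S T : Finset M), S ⊆ T → ∀ j : M, j ∉ T →
      α * (v i (insert j S) - v i S) ≥ v i (insert j T) - v i T)
    (c : N → ℝ) (hc : ∀ i, 0 ≤ c i)
    (l : N → M → ℝ) (hl : ∀ i j, 0 ≤ l i j)
    (ℓ : N → Finset M → ℝ)
    (hℓ : ∀ (i : N) (S : Finset M), ℓ i S = c i + ∑ j ∈ S, l i j)
    (hclose : ∀ (i : N) (S : Finset M), ℓ i S ≤ v i S ∧ v i S ≤ (1 + ε) * ℓ i S)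
    (p : M → ℝ) (hp : ∀ j : M, 0 ≤ p j)
    (S : N → Finset M)
    (hdisj : ∀ i i' : N, i ≠ i' → Disjoint (S i) (S i'))
    (hfull : ∀ j : M, ∃ i : N, j ∈ S i)
    (B : N → Finset M) (hBS : ∀ i : N, B i ⊆ S i)
    (hIR : ∀ (i : N) (B'' : Finset M), B'' ⊆ B i →
      α * (v i B'' - v i ∅) ≥ ∑ j ∈ B'', p j)
    (hopt : ∀ (i : N) (X : Finset M),
      v i (S i) - (∑ j ∈ S i, p j) ≥ v i (B i ∪ X) - ∑ j ∈ B i ∪ X, p j) :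
    ∀ T : N → Finset M, (∀ i i' : N, i ≠ i' → Disjoint (T i) (T i')) →
      ∑ i : N, v i (S i) ≥ (∑ i : N, v i (T i)) / ((1 + ε) * (α + 2 * ε)) := by
  intro T hT
  classical
  have h1ε : (0:ℝ) < 1 + ε := by linarith
  have hαε : (0:ℝ) < α + 2 * ε := by linarith
  have hlow : ∀ (i : N) (X : Finset M), c i + ∑ j ∈ X, l i j ≤ v i X := by
    intro i X; have := (hclose i X).1; rwa [hℓ i X] at this
  have hup : ∀ (i : N) (X : Finset M), v i X ≤ (1 + ε) * (c i + ∑ j ∈ X, l i j) := by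
    intro i X; have := (hclose i X).2; rwa [hℓ i X] at this
  -- Step (a): per-player bound on ℓ i (T i)
  have ha : ∀ i : N, ℓ i (T i) ≤
      (c i + (∑ j ∈ T i ∩ S i, l i j) + (v i (S i) - ℓ i (S i))) + ∑ j ∈ T i \ S i, p j := by
    intro i
    have hBX : B i ∪ ((S i \ B i) ∪ T i) = S i ∪ T i := by
      rw [← Finset.union_assoc, Finset.union_sdiff_of_subset (hBS i)]
    have hX := hopt i ((S i \ B i) ∪ T i)
    rw [hBX] at hX
    have hPsplit : ∑ j ∈ S i ∪ T i, p j = (∑ j ∈ S i, p j) + ∑ j ∈ T i \ S i, p j := by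
      rw [← Finset.union_sdiff_self_eq_union, Finset.sum_union Finset.disjoint_sdiff]
    have hlsplit : ∑ j ∈ S i ∪ T i, l i j = (∑ j ∈ S i, l i j) + ∑ j ∈ T i \ S i, l i j := by
      rw [← Finset.union_sdiff_self_eq_union, Finset.sum_union Finset.disjoint_sdiff]
    have hTsplit : ∑ j ∈ T i, l i j = (∑ j ∈ T i ∩ S i, l i j) + ∑ j ∈ T i \ S i, l i j := by
      have hu : (T i ∩ S i) ∪ (T i \ S i) = T i := by
        ext j
        simp only [Finset.mem_union, Finset.mem_inter, Finset.mem_sdiff]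
        tauto
      have hs := Finset.sum_union (f := l i) (Finset.disjoint_left.mpr
        (fun j hj1 hj2 => (Finset.mem_sdiff.1 hj2).2 (Finset.mem_inter.1 hj1).2)
        : Disjoint (T i ∩ S i) (T i \ S i))
      rw [hu] at hs
      exact hs
    have hcl := hlow i (S i ∪ T i)
    rw [hℓ i (T i), hℓ i (S i)]
    linarith [hlsplit, hPsplit, hTsplit, hcl, hX]
  -- Step (b): total price of T-extras bounded by total price of S-leftovers
  have hb : (∑ i : N, ∑ j ∈ T i \ S i, p j) ≤ ∑ i : N, ∑ j ∈ S i \ T i, p j := by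
    have hd1 : Set.PairwiseDisjoint ↑(Finset.univ : Finset N) (fun i => T i \ S i) := by
      intro i _ i' _ hne
      exact Finset.disjoint_of_subset_left (Finset.sdiff_subset)
        (Finset.disjoint_of_subset_right (Finset.sdiff_subset) (hT i i' hne))
    have hd2 : Set.PairwiseDisjoint ↑(Finset.univ : Finset N) (fun i => S i \ T i) := by
      intro i _ i' _ hne
      exact Finset.disjoint_of_subset_left (Finset.sdiff_subset)
        (Finset.disjoint_of_subset_right (Finset.sdiff_subset) (hdisj i i' hne))
    rw [← Finset.sum_biUnion hd1, ← Finset.sum_biUnion hd2]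
    apply Finset.sum_le_sum_of_subset_of_nonneg
    · intro j hj
      simp only [Finset.mem_biUnion, Finset.mem_sdiff, Finset.mem_univ, true_and] at hj ⊢
      obtain ⟨i, hjT, hjS⟩ := hj
      obtain ⟨i', hi'⟩ := hfull j
      refine ⟨i', hi', fun hjT' => ?_⟩
      have hii : i = i' := by
        by_contra hne
        exact Finset.disjoint_left.1 (hT i i' hne) hjT hjT'
      exact hjS (hii ▸ hi')
    · intro j _ _
      exact hp j
  -- Step (c): per-player bound using prices of S i \ T i
  have hcmain : ∀ i : N,
      (c i + (∑ j ∈ T i ∩ S i, l i j) + (v i (S i) - ℓ i (S i))) + ∑ j ∈ S i \ T i, p j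
        ≤ (α + 2 * ε) * v i (S i) := by
    intro i
    have hBj : ∀ j, j ∈ B i → j ∈ S i := fun j hj => hBS i hj
    -- the three pieces
    have hSD : S i \ T i = (B i \ T i) ∪ ((S i \ B i) \ T i) := by
      ext j
      simp only [Finset.mem_union, Finset.mem_sdiff]
      have := hBj j
      tauto
    have hDW : Disjoint (B i \ T i) ((S i \ B i) \ T i) :=
      Finset.disjoint_left.mpr fun j hj1 hj2 =>
        (Finset.mem_sdiff.1 (Finset.mem_sdiff.1 hj2).1).2 (Finset.mem_sdiff.1 hj1).1
    have hPDW : ∑ j ∈ S i \ T i, p j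
        = (∑ j ∈ B i \ T i, p j) + ∑ j ∈ (S i \ B i) \ T i, p j := by
      rw [hSD, Finset.sum_union hDW]
    have hpD : (∑ j ∈ B i \ T i, p j) ≤ α * (v i (B i \ T i) - v i ∅) :=
      hIR i (B i \ T i) (Finset.sdiff_subset)
    -- price of W := (S i \ B i) \ T i
    have hWS : ((S i \ B i) \ T i) ⊆ S i :=
      (Finset.sdiff_subset).trans (Finset.sdiff_subset)
    have hpW : (∑ j ∈ (S i \ B i) \ T i, p j)
        ≤ v i (S i) - v i (S i \ ((S i \ B i) \ T i)) := by
      have hXopt := hopt i (S i \ ((S i \ B i) \ T i))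
      have hBU : B i ∪ (S i \ ((S i \ B i) \ T i)) = S i \ ((S i \ B i) \ T i) := by
        apply Finset.union_eq_right.mpr
        intro j hj
        exact Finset.mem_sdiff.mpr
          ⟨hBj j hj, fun hw => (Finset.mem_sdiff.1 (Finset.mem_sdiff.1 hw).1).2 hj⟩
      rw [hBU] at hXopt
      have hps : ∑ j ∈ S i, p j
          = (∑ j ∈ S i \ ((S i \ B i) \ T i), p j) + ∑ j ∈ (S i \ B i) \ T i, p j := by
        have hs := Finset.sum_union (f := p)
          (Finset.sdiff_disjoint : Disjoint (S i \ ((S i \ B i) \ T i)) ((S i \ B i) \ T i))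
        rw [Finset.sdiff_union_of_subset hWS] at hs
        exact hs
      linarith
    -- sums of l over the partition of S i
    have hSpart : ∑ j ∈ S i, l i j = (∑ j ∈ T i ∩ S i, l i j)
        + ((∑ j ∈ B i \ T i, l i j) + ∑ j ∈ (S i \ B i) \ T i, l i j) := by
      have hu : (T i ∩ S i) ∪ (S i \ T i) = S i := by
        ext j
        simp only [Finset.mem_union, Finset.mem_inter, Finset.mem_sdiff]
        tauto
      have hs := Finset.sum_union (f := l i) (Finset.disjoint_left.mpr
        (fun j hj1 hj2 => (Finset.mem_sdiff.1 hj2).2 (Finset.mem_inter.1 hj1).1)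
        : Disjoint (T i ∩ S i) (S i \ T i))
      rw [hu, hSD, Finset.sum_union hDW] at hs
      exact hs
    have hXpart : ∑ j ∈ S i \ ((S i \ B i) \ T i), l i j
        = (∑ j ∈ T i ∩ S i, l i j) + ∑ j ∈ B i \ T i, l i j := by
      have hu : S i \ ((S i \ B i) \ T i) = (T i ∩ S i) ∪ (B i \ T i) := by
        ext j
        simp only [Finset.mem_union, Finset.mem_inter, Finset.mem_sdiff]
        have := hBj j
        tauto
      rw [hu]
      exact Finset.sum_union (Finset.disjoint_left.mpr
        (fun j hj1 hj2 => (Finset.mem_sdiff.1 hj2).2 (Finset.mem_inter.1 hj1).1))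
    -- nonnegativity of the linear pieces
    have hlA : (0:ℝ) ≤ ∑ j ∈ T i ∩ S i, l i j := Finset.sum_nonneg fun j _ => hl i j
    have hlD : (0:ℝ) ≤ ∑ j ∈ B i \ T i, l i j := Finset.sum_nonneg fun j _ => hl i j
    have hlW : (0:ℝ) ≤ ∑ j ∈ (S i \ B i) \ T i, l i j := Finset.sum_nonneg fun j _ => hl i j
    -- facts for the scalar lemma
    have hvX : c i + (∑ j ∈ T i ∩ S i, l i j) + (∑ j ∈ B i \ T i, l i j)
        ≤ v i (S i \ ((S i \ B i) \ T i)) := by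
      have := hlow i (S i \ ((S i \ B i) \ T i))
      rw [hXpart] at this
      linarith
    have hvD1 : v i (B i \ T i) ≤ (1 + ε) * (c i + ∑ j ∈ B i \ T i, l i j) := hup i _
    have hvD2 : v i (B i \ T i) ≤ v i (S i) :=
      hmono i _ _ ((Finset.sdiff_subset).trans (hBS i))
    have hv0 : c i ≤ v i ∅ := by
      have := hlow i ∅
      simpa using this
    have hvS1 : c i + (∑ j ∈ T i ∩ S i, l i j) + (∑ j ∈ B i \ T i, l i j)
        + (∑ j ∈ (S i \ B i) \ T i, l i j) ≤ v i (S i) := by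
      have := hlow i (S i)
      rw [hSpart] at this
      linarith
    have hvS2 : v i (S i) ≤ (1 + ε) * (c i + (∑ j ∈ T i ∩ S i, l i j)
        + (∑ j ∈ B i \ T i, l i j) + (∑ j ∈ (S i \ B i) \ T i, l i j)) := by
      have := hup i (S i)
      rw [hSpart] at this
      linarith [this]
    have hkey := kc_aux_ineq α ε (c i) (∑ j ∈ T i ∩ S i, l i j)
      (∑ j ∈ B i \ T i, l i j) (∑ j ∈ (S i \ B i) \ T i, l i j)
      (v i (S i)) (v i (B i \ T i)) (v i ∅) (v i (S i \ ((S i \ B i) \ T i)))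
      hα hε (hc i) hlA hlD hlW hvX hvD1 hvD2 hv0 hvS1 hvS2
    have hlS : ℓ i (S i) = c i + ((∑ j ∈ T i ∩ S i, l i j)
        + ((∑ j ∈ B i \ T i, l i j) + ∑ j ∈ (S i \ B i) \ T i, l i j)) := by
      rw [hℓ i (S i), hSpart]
    rw [hlS, hPDW]
    linarith
  -- assemble
  have hmain : (∑ i : N, ℓ i (T i)) ≤ (α + 2 * ε) * ∑ i : N, v i (S i) := by
    calc (∑ i : N, ℓ i (T i))
        ≤ ∑ i : N, ((c i + (∑ j ∈ T i ∩ S i, l i j) + (v i (S i) - ℓ i (S i)))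
            + ∑ j ∈ T i \ S i, p j) := Finset.sum_le_sum fun i _ => ha i
      _ = (∑ i : N, (c i + (∑ j ∈ T i ∩ S i, l i j) + (v i (S i) - ℓ i (S i))))
            + ∑ i : N, ∑ j ∈ T i \ S i, p j := Finset.sum_add_distrib
      _ ≤ (∑ i : N, (c i + (∑ j ∈ T i ∩ S i, l i j) + (v i (S i) - ℓ i (S i))))
            + ∑ i : N, ∑ j ∈ S i \ T i, p j := by linarith
      _ = ∑ i : N, ((c i + (∑ j ∈ T i ∩ S i, l i j) + (v i (S i) - ℓ i (S i)))
            + ∑ j ∈ S i \ T i, p j) := Finset.sum_add_distrib.symm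
      _ ≤ ∑ i : N, (α + 2 * ε) * v i (S i) := Finset.sum_le_sum fun i _ => hcmain i
      _ = (α + 2 * ε) * ∑ i : N, v i (S i) := (Finset.mul_sum _ _ _).symm
  have hvT : (∑ i : N, v i (T i)) ≤ (1 + ε) * ∑ i : N, ℓ i (T i) := by
    rw [Finset.mul_sum]
    exact Finset.sum_le_sum fun i _ => (hclose i (T i)).2
  rw [ge_iff_le, div_le_iff₀ (mul_pos h1ε hαε)]
  have h3 := mul_le_mul_of_nonneg_left hmain (le_of_lt h1ε)
  calc (∑ i : N, v i (T i)) ≤ (1 + ε) * ((α + 2 * ε) * ∑ i : N, v i (S i)) := le_trans hvT h3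
    _ = (∑ i : N, v i (S i)) * ((1 + ε) * (α + 2 * ε)) := by ring
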